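/- There exists a constant α₁ > 0 such that for every real x ≥ 0 and every integer n ≥ 1, P_x( min_{0 ≤ j ≤ n} S_j ≥ 0 ) ≤ α₁ (1 + x) n^{-1/2}. -/

import Mathlib

set_option linter.unusedSectionVars false
set_option linter.unusedVariables false
set_option maxHeartbeats 1000000

open MeasureTheory ProbabilityTheory Filter Set

-- sum of 1/s^2 bound
lemma sum_inv_sq_le_aux (R : ℕ) :
    ∑ s ∈ Finset.Icc 1 (R+1), (1:ℝ)/(s:ℝ)^2 ≤ 2 - 1/((R:ℝ)+1) := by
  induction R with
  | zero => norm_num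
  | succ R ih =>
    rw [Finset.sum_Icc_succ_top (by omega : 1 ≤ R + 1 + 1)]
    have h1 : (0:ℝ) < (R:ℝ) + 1 := by positivity
    have h2 : (0:ℝ) < (R:ℝ) + 2 := by positivity
    have hc : ((R+1+1 : ℕ) : ℝ) = (R:ℝ) + 2 := by push_cast; ring
    rw [hc]
    have key : (1:ℝ)/((R:ℝ)+2)^2 ≤ 1/((R:ℝ)+1) - 1/((R:ℝ)+2) := by
      rw [div_sub_div _ _ (ne_of_gt h1) (ne_of_gt h2),
        div_le_div_iff₀ (by positivity) (by positivity)]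
      nlinarith
    push_cast
    have hco : ((R:ℝ)+1+1) = (R:ℝ)+2 := by ring
    rw [hco]
    linarith

lemma sum_inv_sq_le (R : ℕ) : ∑ s ∈ Finset.Icc 1 R, (1:ℝ)/(s:ℝ)^2 ≤ 2 := by
  rcases Nat.eq_zero_or_pos R with h0 | hpos
  · rw [h0]; simp
  · obtain ⟨R', rfl⟩ : ∃ R', R = R' + 1 := ⟨R - 1, by omega⟩
    have := sum_inv_sq_le_aux R'
    have h : (0:ℝ) ≤ 1/((R':ℝ)+1) := by positivity
    linarith

lemma sum_inv_sq_shift (R : ℕ) : ∑ r ∈ Finset.Icc 2 R, (1:ℝ)/((r:ℝ)-1)^2 ≤ 2 := by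
  have h : ∑ r ∈ Finset.Icc 2 R, (1:ℝ)/((r:ℝ)-1)^2 = ∑ s ∈ Finset.Icc 1 (R-1), (1:ℝ)/(s:ℝ)^2 := by
    refine Finset.sum_nbij' (fun r => r - 1) (fun s => s + 1) ?_ ?_ ?_ ?_ ?_
    · intro r hr; simp only [Finset.mem_Icc] at *; omega
    · intro s hs; simp only [Finset.mem_Icc] at *; omega
    · intro r hr; simp only [Finset.mem_Icc] at hr; omega
    · intro s hs; simp only [Finset.mem_Icc] at hs; omega
    · intro r hr
      simp only [Finset.mem_Icc] at hr
      congr 1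
      rw [Nat.cast_sub (by omega)]
      norm_num
  rw [h]
  exact sum_inv_sq_le _


section Infra

variable {Ω : Type*} [MeasurableSpace Ω] {μ : Measure Ω} [IsProbabilityMeasure μ]
  {X : ℕ → Ω → ℝ}

/-- Reindexing an independent family along an injective map. -/
lemma indep_reindex (hmeas : ∀ i, Measurable (X i))
    (hindep : iIndepFun X μ)
    {m : ℕ} (e : Fin m → ℕ) (he : Function.Injective e) :
    iIndepFun (fun i => X (e i)) μ := by
  classical
  rw [iIndepFun_iff_measure_inter_preimage_eq_mul]
  intro S sets hsets
  have hS' : ∀ i ∈ S, MeasurableSet ((fun n : ℕ =>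
      ⋂ j ∈ S.filter (fun j => e j = n), sets j) (e i)) := by
    intro i hi
    exact MeasurableSet.biInter (Set.to_countable _) (fun j hj => hsets j (Finset.mem_filter.1 hj).1)
  have key := hindep.measure_inter_preimage_eq_mul (S.image e)
      (sets := fun n => ⋂ j ∈ S.filter (fun j => e j = n), sets j) ?_
  · have hfix : ∀ i ∈ S, (⋂ j ∈ S.filter (fun j => e j = e i), sets j) = sets i := by
      intro i hi
      have : S.filter (fun j => e j = e i) = {i} := by
        ext j
        simp only [Finset.mem_filter, Finset.mem_singleton]
        constructor
        · rintro ⟨hj, hji⟩; exact he hji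
        · rintro rfl; exact ⟨hi, rfl⟩
      rw [this]
      simp
    have h1 : (⋂ n ∈ S.image e, X n ⁻¹' (⋂ j ∈ S.filter (fun j => e j = n), sets j))
        = ⋂ i ∈ S, X (e i) ⁻¹' sets i := by
      rw [Finset.set_biInter_finset_image]
      exact Set.iInter₂_congr (fun i hi => by rw [hfix i hi])
    have h2 : (∏ n ∈ S.image e, μ (X n ⁻¹' (⋂ j ∈ S.filter (fun j => e j = n), sets j)))
        = ∏ i ∈ S, μ (X (e i) ⁻¹' sets i) := by
      rw [Finset.prod_image (fun a ha b hb hab => he hab)]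
      exact Finset.prod_congr rfl (fun i hi => by rw [hfix i hi])
    rw [h1, h2] at key
    exact key
  · intro n hn
    simp only [Finset.mem_image] at hn
    obtain ⟨i, hi, rfl⟩ := hn
    exact hS' i hi

/-- The law of a reindexed vector of iid random variables is the product of the common law. -/
lemma vec_law (hmeas : ∀ i, Measurable (X i))
    (hindep : iIndepFun X μ)
    (hident : ∀ i, IdentDistrib (X i) (X 0) μ μ)
    {m : ℕ} (e : Fin m → ℕ) (he : Function.Injective e) :
    μ.map (fun ω (i : Fin m) => X (e i) ω)
      = Measure.pi (fun _ : Fin m => μ.map (X 0)) := by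
  have hXm : Measurable (fun ω (i : Fin m) => X (e i) ω) :=
    measurable_pi_lambda _ (fun i => hmeas (e i))
  have : IsProbabilityMeasure (μ.map (X 0)) :=
    Measure.isProbabilityMeasure_map (hmeas 0).aemeasurable
  refine (Measure.pi_eq fun s hs => ?_).symm
  rw [Measure.map_apply hXm (MeasurableSet.univ_pi hs)]
  have hpre : (fun ω (i : Fin m) => X (e i) ω) ⁻¹' (Set.univ.pi s)
      = ⋂ i ∈ (Finset.univ : Finset (Fin m)), X (e i) ⁻¹' s i := by
    ext ω; simp [Set.mem_pi]
  rw [hpre, (indep_reindex hmeas hindep e he).measure_inter_preimage_eq_mul Finset.univ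
    (fun i _ => hs i)]
  refine Finset.prod_congr rfl (fun i _ => ?_)
  rw [← (hident (e i)).map_eq, Measure.map_apply (hmeas (e i)) (hs i)]

/-- Probabilities of vector events do not depend on the (injective) choice of indices. -/
lemma prob_vec_eq (hmeas : ∀ i, Measurable (X i))
    (hindep : iIndepFun X μ)
    (hident : ∀ i, IdentDistrib (X i) (X 0) μ μ)
    {m : ℕ} (e e' : Fin m → ℕ) (he : Function.Injective e) (he' : Function.Injective e')
    {A : Set (Fin m → ℝ)} (hA : MeasurableSet A) :
    μ ((fun ω (i : Fin m) => X (e i) ω) ⁻¹' A)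
      = μ ((fun ω (i : Fin m) => X (e' i) ω) ⁻¹' A) := by
  have h1 := vec_law hmeas hindep hident e he
  have h2 := vec_law hmeas hindep hident e' he'
  rw [← Measure.map_apply (measurable_pi_lambda _ (fun i => hmeas (e i))) hA,
    ← Measure.map_apply (measurable_pi_lambda _ (fun i => hmeas (e' i))) hA, h1, h2]

/-- Independence of two vector events over disjoint index ranges. -/
lemma indep_vec_pair (hmeas : ∀ i, Measurable (X i))
    (hindep : iIndepFun X μ)
    {k m : ℕ} (e₁ : Fin k → ℕ) (e₂ : Fin m → ℕ)
    (hd : Disjoint (Finset.image e₁ Finset.univ) (Finset.image e₂ Finset.univ))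
    {A : Set (Fin k → ℝ)} {B : Set (Fin m → ℝ)}
    (hA : MeasurableSet A) (hB : MeasurableSet B) :
    μ ((fun ω (i : Fin k) => X (e₁ i) ω) ⁻¹' A ∩ (fun ω (i : Fin m) => X (e₂ i) ω) ⁻¹' B)
      = μ ((fun ω (i : Fin k) => X (e₁ i) ω) ⁻¹' A)
        * μ ((fun ω (i : Fin m) => X (e₂ i) ω) ⁻¹' B) := by
  classical
  set S := Finset.image e₁ Finset.univ
  set T := Finset.image e₂ Finset.univ
  have hIF : IndepFun (fun a (i : S) => X (i : ℕ) a) (fun a (i : T) => X (i : ℕ) a) μ :=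
    iIndepFun.indepFun_finset S T hd hindep hmeas
  have h1 : ∀ i : Fin k, e₁ i ∈ S := fun i => Finset.mem_image_of_mem _ (Finset.mem_univ i)
  have h2 : ∀ i : Fin m, e₂ i ∈ T := fun i => Finset.mem_image_of_mem _ (Finset.mem_univ i)
  set g₁ : (S → ℝ) → (Fin k → ℝ) := fun u i => u ⟨e₁ i, h1 i⟩
  set g₂ : (T → ℝ) → (Fin m → ℝ) := fun u i => u ⟨e₂ i, h2 i⟩
  have hg₁ : Measurable g₁ := measurable_pi_lambda _ (fun i => measurable_pi_apply _)
  have hg₂ : Measurable g₂ := measurable_pi_lambda _ (fun i => measurable_pi_apply _)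
  have hIF2 : IndepFun (g₁ ∘ fun a (i : S) => X (i : ℕ) a)
      (g₂ ∘ fun a (i : T) => X (i : ℕ) a) μ := hIF.comp hg₁ hg₂
  have e1 : (g₁ ∘ fun a (i : S) => X (i : ℕ) a) = fun ω (i : Fin k) => X (e₁ i) ω := rfl
  have e2 : (g₂ ∘ fun a (i : T) => X (i : ℕ) a) = fun ω (i : Fin m) => X (e₂ i) ω := rfl
  rw [e1, e2] at hIF2
  exact hIF2.measure_inter_preimage_eq_mul A B hA hB


/-- prefix sums of a finite vector, with padding by zero -/
def psum {m : ℕ} (v : Fin m → ℝ) (j : ℕ) : ℝ :=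
  ∑ t ∈ Finset.range j, if h : t < m then v ⟨t, h⟩ else 0

lemma measurable_psum (m j : ℕ) : Measurable (fun v : Fin m → ℝ => psum v j) := by
  unfold psum
  refine Finset.measurable_sum _ (fun t _ => ?_)
  split_ifs with h
  · exact measurable_pi_apply _
  · exact measurable_const

variable {S : ℕ → Ω → ℝ}

lemma S_zero (hS : ∀ n ω, S n ω = ∑ i ∈ Finset.range n, X i ω) (ω : Ω) : S 0 ω = 0 := by
  rw [hS]; simp

lemma S_succ (hS : ∀ n ω, S n ω = ∑ i ∈ Finset.range n, X i ω) (n : ℕ) (ω : Ω) :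
    S (n + 1) ω = S n ω + X n ω := by
  rw [hS, hS, Finset.sum_range_succ]

lemma S_block (hS : ∀ n ω, S n ω = ∑ i ∈ Finset.range n, X i ω) {k n : ℕ} (hkn : k ≤ n) (ω : Ω) :
    S n ω - S k ω = ∑ i ∈ Finset.Ico k n, X i ω := by
  rw [hS, hS, Finset.sum_Ico_eq_sub _ hkn]

lemma psum_prefix (hS : ∀ n ω, S n ω = ∑ i ∈ Finset.range n, X i ω)
    (ω : Ω) {k j : ℕ} (hj : j ≤ k) :
    psum (fun i : Fin k => X (i : ℕ) ω) j = S j ω := by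
  rw [hS]
  unfold psum
  refine Finset.sum_congr rfl (fun t ht => ?_)
  rw [dif_pos (lt_of_lt_of_le (Finset.mem_range.1 ht) hj)]

lemma psum_shift (hS : ∀ n ω, S n ω = ∑ i ∈ Finset.range n, X i ω)
    (ω : Ω) {k m j : ℕ} (hj : j ≤ m) :
    psum (fun i : Fin m => X (k + (i : ℕ)) ω) j = S (k + j) ω - S k ω := by
  rw [S_block hS (Nat.le_add_right k j), Finset.sum_Ico_eq_sum_range]
  simp only [Nat.add_sub_cancel_left]
  unfold psum
  refine Finset.sum_congr rfl (fun t ht => ?_)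
  rw [dif_pos (lt_of_lt_of_le (Finset.mem_range.1 ht) hj)]

lemma psum_rev (hS : ∀ n ω, S n ω = ∑ i ∈ Finset.range n, X i ω)
    (ω : Ω) {j i : ℕ} (hi : i ≤ j) :
    psum (fun t : Fin j => X (j - 1 - (t : ℕ)) ω) i = S j ω - S (j - i) ω := by
  rw [S_block hS (Nat.sub_le j i)]
  have h1 : psum (fun t : Fin j => X (j - 1 - (t : ℕ)) ω) i
      = ∑ t ∈ Finset.range i, X (j - 1 - t) ω := by
    unfold psum
    refine Finset.sum_congr rfl (fun t ht => ?_)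
    rw [dif_pos (lt_of_lt_of_le (Finset.mem_range.1 ht) hi)]
  rw [h1]
  refine (Finset.sum_nbij' (fun t => j - 1 - t) (fun u => j - 1 - u) ?_ ?_ ?_ ?_ ?_).symm
  · intro u hu
    simp only [Finset.mem_Ico] at hu
    simp only [Finset.mem_range]
    omega
  · intro t ht
    simp only [Finset.mem_range] at ht
    simp only [Finset.mem_Ico]
    omega
  · intro u hu
    simp only [Finset.mem_Ico] at hu
    omega
  · intro t ht
    simp only [Finset.mem_range] at ht
    omega
  · intro u hu
    simp only [Finset.mem_Ico] at hu
    congr 1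
    omega

/-- the canonical "stay above `-y`" set -/
def staySet (m : ℕ) (y : ℝ) : Set (Fin m → ℝ) := {v | ∀ i ≤ m, -y < psum v i}

lemma measurable_staySet (m : ℕ) (y : ℝ) : MeasurableSet (staySet m y) := by
  have : staySet m y = ⋂ i, ⋂ (_ : i ≤ m), {v : Fin m → ℝ | -y < psum v i} := by
    ext v; simp [staySet]
  rw [this]
  exact MeasurableSet.iInter fun i => MeasurableSet.iInter fun _ =>
    measurableSet_lt measurable_const (measurable_psum m i)

lemma stay_prefix_eq (hS : ∀ n ω, S n ω = ∑ i ∈ Finset.range n, X i ω) (j : ℕ) (y : ℝ) :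
    (fun ω (i : Fin j) => X (i : ℕ) ω) ⁻¹' staySet j y = {ω | ∀ i ≤ j, -y < S i ω} := by
  ext ω
  simp only [mem_preimage, staySet, mem_setOf_eq]
  exact forall₂_congr (fun i hi => by rw [psum_prefix hS ω hi])

lemma stay_shift_eq (hS : ∀ n ω, S n ω = ∑ i ∈ Finset.range n, X i ω) (k j : ℕ) (y : ℝ) :
    (fun ω (i : Fin j) => X (k + (i : ℕ)) ω) ⁻¹' staySet j y
      = {ω | ∀ i ≤ j, -y < S (k + i) ω - S k ω} := by
  ext ω
  simp only [mem_preimage, staySet, mem_setOf_eq]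
  exact forall₂_congr (fun i hi => by rw [psum_shift hS ω hi])

lemma stay_rev_eq (hS : ∀ n ω, S n ω = ∑ i ∈ Finset.range n, X i ω) (j : ℕ) (y : ℝ) :
    (fun ω (t : Fin j) => X (j - 1 - (t : ℕ)) ω) ⁻¹' staySet j y
      = {ω | ∀ i ≤ j, -y < S j ω - S i ω} := by
  ext ω
  simp only [mem_preimage, staySet, mem_setOf_eq]
  constructor
  · intro h i hi
    have := h (j - i) (Nat.sub_le j i)
    rw [psum_rev hS ω (Nat.sub_le j i)] at this
    rwa [show j - (j - i) = i by omega] at this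
  · intro h i hi
    rw [psum_rev hS ω hi]
    exact h (j - i) (Nat.sub_le j i)


-- now the real content of part 3

lemma rev_inj (j : ℕ) : Function.Injective (fun t : Fin j => j - 1 - (t : ℕ)) := by
  intro t t' h
  have h1 := t.isLt
  have h2 := t'.isLt
  dsimp only at h
  exact Fin.ext (by omega)

lemma shift_inj (k j : ℕ) : Function.Injective (fun t : Fin j => k + (t : ℕ)) := by
  intro t t' h
  dsimp only at h
  exact Fin.ext (by omega)

lemma val_inj (j : ℕ) : Function.Injective (fun t : Fin j => (t : ℕ)) :=
  fun t t' h => Fin.ext h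

lemma prob_stay_shift (hmeas : ∀ i, Measurable (X i))
    (hindep : iIndepFun X μ)
    (hident : ∀ i, IdentDistrib (X i) (X 0) μ μ)
    (hS : ∀ n ω, S n ω = ∑ i ∈ Finset.range n, X i ω) (k j : ℕ) (y : ℝ) :
    μ {ω | ∀ i ≤ j, -y < S (k + i) ω - S k ω} = μ {ω | ∀ i ≤ j, -y < S i ω} := by
  rw [← stay_shift_eq hS k j y, ← stay_prefix_eq hS j y]
  exact prob_vec_eq hmeas hindep hident _ _ (shift_inj k j) (val_inj j)
    (measurable_staySet j y)

lemma prob_stay_rev (hmeas : ∀ i, Measurable (X i))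
    (hindep : iIndepFun X μ)
    (hident : ∀ i, IdentDistrib (X i) (X 0) μ μ)
    (hS : ∀ n ω, S n ω = ∑ i ∈ Finset.range n, X i ω) (j : ℕ) (y : ℝ) :
    μ {ω | ∀ i ≤ j, -y < S j ω - S i ω} = μ {ω | ∀ i ≤ j, -y < S i ω} := by
  rw [← stay_rev_eq hS j y, ← stay_prefix_eq hS j y]
  exact prob_vec_eq hmeas hindep hident _ _ (rev_inj j) (val_inj j)
    (measurable_staySet j y)

lemma prob_jump (hmeas : ∀ i, Measurable (X i))
    (hindep : iIndepFun X μ)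
    (hident : ∀ i, IdentDistrib (X i) (X 0) μ μ)
    (hS : ∀ n ω, S n ω = ∑ i ∈ Finset.range n, X i ω) (j : ℕ) (y β : ℝ) :
    μ ({ω | ∀ i ≤ j, -y < S j ω - S i ω} ∩ {ω | β ≤ X j ω})
      = μ {ω | ∀ i ≤ j, -y < S i ω} * μ {ω | β ≤ X 0 ω} := by
  have hB : MeasurableSet {v : Fin 1 → ℝ | β ≤ v 0} :=
    measurableSet_le measurable_const (measurable_pi_apply _)
  have hpre : (fun ω (i : Fin 1) => X ((fun _ : Fin 1 => j) i) ω) ⁻¹' {v : Fin 1 → ℝ | β ≤ v 0}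
      = {ω | β ≤ X j ω} := rfl
  have hd : Disjoint (Finset.image (fun t : Fin j => j - 1 - (t : ℕ)) Finset.univ)
      (Finset.image (fun _ : Fin 1 => j) Finset.univ) := by
    rw [Finset.disjoint_left]
    intro a ha hb
    simp only [Finset.mem_image, Finset.mem_univ, true_and] at ha hb
    obtain ⟨t, ht⟩ := ha
    obtain ⟨_, hb⟩ := hb
    have := t.isLt
    omega
  have key := indep_vec_pair hmeas hindep
    (fun t : Fin j => j - 1 - (t : ℕ)) (fun _ : Fin 1 => j) hd
    (measurable_staySet j y) hB
  rw [stay_rev_eq hS j y, hpre] at key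
  rw [key]
  congr 1
  · exact prob_stay_rev hmeas hindep hident hS j y
  · have h0 : {ω | β ≤ X j ω} = X j ⁻¹' Ici β := rfl
    have h1 : {ω | β ≤ X 0 ω} = X 0 ⁻¹' Ici β := rfl
    rw [h0, h1, ← Measure.map_apply (hmeas j) measurableSet_Ici,
      ← Measure.map_apply (hmeas 0) measurableSet_Ici, (hident j).map_eq]

def fpSet (k : ℕ) (c : ℝ) : Set (Fin k → ℝ) :=
  {v | (∀ i < k, -c < psum v i) ∧ psum v k ≤ -c}

lemma measurable_fpSet (k : ℕ) (c : ℝ) : MeasurableSet (fpSet k c) := by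
  have : fpSet k c = (⋂ i, ⋂ (_ : i < k), {v : Fin k → ℝ | -c < psum v i})
      ∩ {v : Fin k → ℝ | psum v k ≤ -c} := by
    ext v; simp [fpSet]
  rw [this]
  exact (MeasurableSet.iInter fun i => MeasurableSet.iInter fun _ =>
    measurableSet_lt measurable_const (measurable_psum k i)).inter
    (measurableSet_le (measurable_psum k k) measurable_const)

lemma fp_prefix_eq (hS : ∀ n ω, S n ω = ∑ i ∈ Finset.range n, X i ω) (k : ℕ) (c : ℝ) :
    (fun ω (i : Fin k) => X (i : ℕ) ω) ⁻¹' fpSet k c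
      = {ω | (∀ i < k, -c < S i ω) ∧ S k ω ≤ -c} := by
  ext ω
  simp only [mem_preimage, fpSet, mem_setOf_eq]
  constructor
  · rintro ⟨h1, h2⟩
    refine ⟨fun i hi => ?_, ?_⟩
    · have := h1 i hi; rwa [psum_prefix hS ω hi.le] at this
    · rwa [psum_prefix hS ω le_rfl] at h2
  · rintro ⟨h1, h2⟩
    refine ⟨fun i hi => ?_, ?_⟩
    · rw [psum_prefix hS ω hi.le]; exact h1 i hi
    · rwa [psum_prefix hS ω le_rfl]

lemma disj_prefix_shift (k j : ℕ) :
    Disjoint (Finset.image (fun t : Fin k => (t : ℕ)) Finset.univ)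
      (Finset.image (fun t : Fin j => k + (t : ℕ)) Finset.univ) := by
  rw [Finset.disjoint_left]
  intro a ha hb
  simp only [Finset.mem_image, Finset.mem_univ, true_and] at ha hb
  obtain ⟨t, ht⟩ := ha
  obtain ⟨u, hu⟩ := hb
  have := t.isLt
  omega

lemma prob_fp_stay (hmeas : ∀ i, Measurable (X i))
    (hindep : iIndepFun X μ)
    (hident : ∀ i, IdentDistrib (X i) (X 0) μ μ)
    (hS : ∀ n ω, S n ω = ∑ i ∈ Finset.range n, X i ω) (c : ℝ) (k j : ℕ) (y : ℝ) :
    μ ({ω | (∀ i < k, -c < S i ω) ∧ S k ω ≤ -c} ∩ {ω | ∀ i ≤ j, -y < S (k + i) ω - S k ω})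
      = μ {ω | (∀ i < k, -c < S i ω) ∧ S k ω ≤ -c} * μ {ω | ∀ i ≤ j, -y < S i ω} := by
  have key := indep_vec_pair hmeas hindep
    (fun t : Fin k => (t : ℕ)) (fun t : Fin j => k + (t : ℕ)) (disj_prefix_shift k j)
    (measurable_fpSet k c) (measurable_staySet j y)
  rw [fp_prefix_eq hS k c, stay_shift_eq hS k j y] at key
  rw [key, prob_stay_shift hmeas hindep hident hS k j y]

def upSet (k : ℕ) (lam : ℝ) : Set (Fin k → ℝ) :=
  {v | (∀ i < k, psum v i < lam) ∧ lam ≤ psum v k}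

lemma measurable_upSet (k : ℕ) (lam : ℝ) : MeasurableSet (upSet k lam) := by
  have : upSet k lam = (⋂ i, ⋂ (_ : i < k), {v : Fin k → ℝ | psum v i < lam})
      ∩ {v : Fin k → ℝ | lam ≤ psum v k} := by
    ext v; simp [upSet]
  rw [this]
  exact (MeasurableSet.iInter fun i => MeasurableSet.iInter fun _ =>
    measurableSet_lt (measurable_psum k i) measurable_const).inter
    (measurableSet_le measurable_const (measurable_psum k k))

lemma up_prefix_eq (hS : ∀ n ω, S n ω = ∑ i ∈ Finset.range n, X i ω) (k : ℕ) (lam : ℝ) :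
    (fun ω (i : Fin k) => X (i : ℕ) ω) ⁻¹' upSet k lam
      = {ω | (∀ i < k, S i ω < lam) ∧ lam ≤ S k ω} := by
  ext ω
  simp only [mem_preimage, upSet, mem_setOf_eq]
  constructor
  · rintro ⟨h1, h2⟩
    refine ⟨fun i hi => ?_, ?_⟩
    · have := h1 i hi; rwa [psum_prefix hS ω hi.le] at this
    · rwa [psum_prefix hS ω le_rfl] at h2
  · rintro ⟨h1, h2⟩
    refine ⟨fun i hi => ?_, ?_⟩
    · rw [psum_prefix hS ω hi.le]; exact h1 i hi
    · rwa [psum_prefix hS ω le_rfl]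

lemma prob_up_pair (hmeas : ∀ i, Measurable (X i))
    (hindep : iIndepFun X μ)
    (hS : ∀ n ω, S n ω = ∑ i ∈ Finset.range n, X i ω) (lam a : ℝ) {k n : ℕ} (hkn : k ≤ n) :
    μ ({ω | (∀ i < k, S i ω < lam) ∧ lam ≤ S k ω} ∩ {ω | -a ≤ S n ω - S k ω})
      = μ {ω | (∀ i < k, S i ω < lam) ∧ lam ≤ S k ω} * μ {ω | -a ≤ S n ω - S k ω} := by
  have hB : MeasurableSet {v : Fin (n - k) → ℝ | -a ≤ psum v (n - k)} :=
    measurableSet_le measurable_const (measurable_psum _ _)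
  have hpre : (fun ω (i : Fin (n - k)) => X (k + (i : ℕ)) ω)
      ⁻¹' {v : Fin (n - k) → ℝ | -a ≤ psum v (n - k)} = {ω | -a ≤ S n ω - S k ω} := by
    ext ω
    simp only [mem_preimage, mem_setOf_eq]
    rw [psum_shift hS ω le_rfl, show k + (n - k) = n by omega]
  have key := indep_vec_pair hmeas hindep
    (fun t : Fin k => (t : ℕ)) (fun t : Fin (n - k) => k + (t : ℕ)) (disj_prefix_shift k (n - k))
    (measurable_upSet k lam) hB
  rw [up_prefix_eq hS k lam, hpre] at key
  exact key

lemma cheb_block (hmeas : ∀ i, Measurable (X i))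
    (hindep : iIndepFun X μ)
    (hident : ∀ i, IdentDistrib (X i) (X 0) μ μ)
    (hL2 : MemLp (X 0) 2 μ) (hmean : ∫ ω, X 0 ω ∂μ = 0)
    (hS : ∀ n ω, S n ω = ∑ i ∈ Finset.range n, X i ω) {k n : ℕ} (hkn : k ≤ n)
    {t : ℝ} (ht : 0 < t) :
    μ {ω | t ≤ |S n ω - S k ω|}
      ≤ ENNReal.ofReal (((n - k : ℕ) : ℝ) * variance (X 0) μ / t ^ 2) := by
  have hL2i : ∀ i : ℕ, MemLp (X i) 2 μ := fun i => (hident i).symm.memLp_snd hL2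
  set Y : Ω → ℝ := fun ω => ∑ i ∈ Finset.Ico k n, X i ω with hY
  have hsumfun : Y = ∑ i ∈ Finset.Ico k n, X i := by ext ω; simp [hY]
  have hYL2 : MemLp Y 2 μ := by
    rw [hsumfun]; exact memLp_finset_sum' _ (fun i _ => hL2i i)
  have hmean' : ∀ i : ℕ, ∫ ω, X i ω ∂μ = 0 := fun i => by
    rw [(hident i).integral_eq]; exact hmean
  have hEY : ∫ ω, Y ω ∂μ = 0 := by
    rw [hY]
    rw [integral_finset_sum _ (fun i _ => ((hident i).symm.memLp_snd hL2).integrable one_le_two)]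
    simp [hmean']
  have hvarY : variance Y μ = ((n - k : ℕ) : ℝ) * variance (X 0) μ := by
    have := IndepFun.variance_sum (μ := μ) (X := X) (s := Finset.Ico k n)
      (fun i _ => hL2i i) (fun i _ j _ hij => hindep.indepFun hij)
    rw [hY]
    have hsum : (∑ i ∈ Finset.Ico k n, X i) = fun ω => ∑ i ∈ Finset.Ico k n, X i ω := by
      ext ω; simp
    rw [← hsum, this]
    have : ∀ i ∈ Finset.Ico k n, variance (X i) μ = variance (X 0) μ := fun i _ =>
      (hident i).variance_eq
    rw [Finset.sum_congr rfl this, Finset.sum_const, Nat.card_Ico]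
    simp [nsmul_eq_mul]
  have key := meas_ge_le_variance_div_sq (μ := μ) hYL2 ht
  rw [hvarY] at key
  have hset : {ω | t ≤ |S n ω - S k ω|} = {ω | t ≤ |Y ω - μ[Y]|} := by
    ext ω
    simp only [mem_setOf_eq]
    rw [hEY, sub_zero, S_block hS hkn ω]
  rwa [hset]


def runMax (S : ℕ → Ω → ℝ) : ℕ → Ω → ℝ
  | 0 => S 0
  | n+1 => fun ω => max (runMax S n ω) (S (n+1) ω)

lemma le_runMax {n j : ℕ} (hj : j ≤ n) (ω : Ω) : S j ω ≤ runMax S n ω := by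
  induction n with
  | zero => simp_all [runMax]
  | succ n ih =>
    rcases Nat.lt_or_ge j (n+1) with h | h
    · exact le_trans (ih (by omega)) (le_max_left _ _)
    · have : j = n + 1 := by omega
      subst this
      exact le_max_right _ _

lemma runMax_eq_S {n : ℕ} (ω : Ω) : ∃ j ≤ n, runMax S n ω = S j ω := by
  induction n with
  | zero => exact ⟨0, le_rfl, rfl⟩
  | succ n ih =>
    obtain ⟨j, hj, hje⟩ := ih
    rcases le_or_gt (S (n+1) ω) (runMax S n ω) with h | h
    · refine ⟨j, by omega, ?_⟩
      show max (runMax S n ω) (S (n+1) ω) = S j ω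
      rw [max_eq_left h, hje]
    · refine ⟨n+1, le_rfl, ?_⟩
      show max (runMax S n ω) (S (n+1) ω) = S (n+1) ω
      rw [max_eq_right h.le]

lemma runMax_succ_ge (n : ℕ) (ω : Ω) : runMax S n ω ≤ runMax S (n+1) ω := le_max_left _ _

lemma measurable_S (hmeas : ∀ i, Measurable (X i))
    (hS : ∀ n ω, S n ω = ∑ i ∈ Finset.range n, X i ω) (n : ℕ) : Measurable (S n) := by
  have : S n = fun ω => ∑ i ∈ Finset.range n, X i ω := funext (hS n)
  rw [this]
  exact Finset.measurable_sum _ (fun i _ => hmeas i)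

lemma measurable_runMax (hmeasS : ∀ n, Measurable (S n)) (n : ℕ) :
    Measurable (runMax S n) := by
  induction n with
  | zero => exact hmeasS 0
  | succ n ih => exact Measurable.max ih (hmeasS (n+1))

-- real-probability helpers
lemma Pr_mono {A B : Set Ω} (h : A ⊆ B) : (μ A).toReal ≤ (μ B).toReal :=
  ENNReal.toReal_mono (measure_ne_top μ B) (measure_mono h)

lemma Pr_le_one {A : Set Ω} : (μ A).toReal ≤ 1 := by
  have h : μ A ≤ 1 := prob_le_one
  calc (μ A).toReal ≤ (1 : ENNReal).toReal := ENNReal.toReal_mono ENNReal.one_ne_top h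
    _ = 1 := ENNReal.toReal_one

lemma Pr_biUnion_le {s : Finset ℕ} {A : ℕ → Set Ω} :
    (μ (⋃ k ∈ s, A k)).toReal ≤ ∑ k ∈ s, (μ (A k)).toReal := by
  refine le_trans (ENNReal.toReal_mono ?_ (measure_biUnion_finset_le s A)) ?_
  · exact (ENNReal.sum_lt_top.2 fun k _ => measure_lt_top μ (A k)).ne
  · rw [ENNReal.toReal_sum (fun k _ => measure_ne_top μ (A k))]

lemma Pr_biUnion_disjoint {s : Finset ℕ} {A : ℕ → Set Ω}
    (hd : Set.Pairwise ↑s (Function.onFun Disjoint A)) (hm : ∀ k ∈ s, MeasurableSet (A k)) :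
    (μ (⋃ k ∈ s, A k)).toReal = ∑ k ∈ s, (μ (A k)).toReal := by
  rw [measure_biUnion_finset hd hm, ENNReal.toReal_sum (fun k _ => measure_ne_top μ (A k))]

/-- Ottaviani-type maximal inequality. -/
lemma ottaviani (hmeasS : ∀ n, Measurable (S n))
    (hindep2 : ∀ (lam a : ℝ) {k n : ℕ}, k ≤ n →
      μ ({ω | (∀ i < k, S i ω < lam) ∧ lam ≤ S k ω} ∩ {ω | -a ≤ S n ω - S k ω})
        = μ {ω | (∀ i < k, S i ω < lam) ∧ lam ≤ S k ω} * μ {ω | -a ≤ S n ω - S k ω})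
    (hS0 : ∀ ω, S 0 ω = 0)
    {n : ℕ} {lam a : ℝ} (hlam : 0 < lam)
    (hhalf : ∀ k, k ≤ n → (1:ℝ)/2 ≤ (μ {ω | -a ≤ S n ω - S k ω}).toReal) :
    (μ {ω | lam ≤ runMax S n ω}).toReal ≤ 2 * (μ {ω | lam - a ≤ S n ω}).toReal := by
  classical
  set C : ℕ → Set Ω := fun k => {ω | (∀ i < k, S i ω < lam) ∧ lam ≤ S k ω} with hC
  have hCme : ∀ k, MeasurableSet (C k) := by
    intro k
    have : C k = (⋂ i, ⋂ (_ : i < k), {ω | S i ω < lam}) ∩ {ω | lam ≤ S k ω} := by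
      ext ω; simp [hC]
    rw [this]
    exact (MeasurableSet.iInter fun i => MeasurableSet.iInter fun _ =>
      measurableSet_lt (hmeasS i) measurable_const).inter
      (measurableSet_le measurable_const (hmeasS k))
  have hDme : ∀ k, MeasurableSet {ω | -a ≤ S n ω - S k ω} := fun k =>
    measurableSet_le measurable_const ((hmeasS n).sub (hmeasS k))
  have hcover : {ω | lam ≤ runMax S n ω} ⊆ ⋃ k ∈ Finset.range (n+1), C k := by
    intro ω hω
    simp only [mem_setOf_eq] at hω
    obtain ⟨j, hj, hje⟩ := runMax_eq_S (S := S) (n := n) ω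
    have hex : ∃ i, lam ≤ S i ω := ⟨j, hje ▸ hω⟩
    set k := Nat.find hex with hk
    have hkj : k ≤ j := Nat.find_min' hex (hje ▸ hω)
    refine mem_biUnion (Finset.mem_range.2 (Nat.lt_succ_of_le (le_trans hkj hj))) ?_
    refine ⟨fun i hi => ?_, Nat.find_spec hex⟩
    exact lt_of_not_ge (Nat.find_min hex hi)
  have hCdisj : Set.Pairwise ↑(Finset.range (n+1)) (Function.onFun Disjoint C) := by
    intro k _ k' _ hkk'
    rcases Nat.lt_or_ge k k' with h | h
    · exact Set.disjoint_left.2 fun ω hω hω' => absurd (hω'.1 k h) (not_lt.2 hω.2)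
    · have h' : k' < k := by omega
      exact Set.disjoint_left.2 fun ω hω hω' => absurd (hω.1 k' h') (not_lt.2 hω'.2)
  have step1 : (μ {ω | lam ≤ runMax S n ω}).toReal
      ≤ ∑ k ∈ Finset.range (n+1), (μ (C k)).toReal :=
    le_trans (Pr_mono hcover) Pr_biUnion_le
  have step2 : ∀ k ∈ Finset.range (n+1),
      (μ (C k)).toReal ≤ 2 * (μ (C k ∩ {ω | -a ≤ S n ω - S k ω})).toReal := by
    intro k hk
    have hprod := hindep2 lam a (Nat.lt_succ_iff.1 (Finset.mem_range.1 hk))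
    have : (μ (C k ∩ {ω | -a ≤ S n ω - S k ω})).toReal
        = (μ (C k)).toReal * (μ {ω | -a ≤ S n ω - S k ω}).toReal := by
      rw [hC]
      rw [hprod, ENNReal.toReal_mul]
    rw [this]
    have h2 := hhalf k (Nat.lt_succ_iff.1 (Finset.mem_range.1 hk))
    nlinarith [ENNReal.toReal_nonneg (a := μ (C k))]
  have step3 : ∑ k ∈ Finset.range (n+1), (μ (C k ∩ {ω | -a ≤ S n ω - S k ω})).toReal
      ≤ (μ {ω | lam - a ≤ S n ω}).toReal := by
    rw [← Pr_biUnion_disjoint (A := fun k => C k ∩ {ω | -a ≤ S n ω - S k ω})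
      (hCdisj.mono' (fun k k' h => Disjoint.mono inter_subset_left inter_subset_left h))
      (fun k _ => (hCme k).inter (hDme k))]
    refine Pr_mono (iUnion₂_subset fun k hk ω hω => ?_)
    have h1 : lam ≤ S k ω := hω.1.2
    have h2 : -a ≤ S n ω - S k ω := hω.2
    simp only [mem_setOf_eq]
    linarith
  calc (μ {ω | lam ≤ runMax S n ω}).toReal
      ≤ ∑ k ∈ Finset.range (n+1), (μ (C k)).toReal := step1
    _ ≤ ∑ k ∈ Finset.range (n+1), 2 * (μ (C k ∩ {ω | -a ≤ S n ω - S k ω})).toReal :=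
        Finset.sum_le_sum step2
    _ = 2 * ∑ k ∈ Finset.range (n+1), (μ (C k ∩ {ω | -a ≤ S n ω - S k ω})).toReal := by
        rw [Finset.mul_sum]
    _ ≤ 2 * (μ {ω | lam - a ≤ S n ω}).toReal := by linarith [step3]


/-- Expected capped maximum bound. -/
lemma exp_capped_max (hmeas : ∀ i, Measurable (X i))
    (hindep : iIndepFun X μ)
    (hident : ∀ i, IdentDistrib (X i) (X 0) μ μ)
    (hL2 : MemLp (X 0) 2 μ) (hmean : ∫ ω, X 0 ω ∂μ = 0)
    (hvar : 0 < variance (X 0) μ)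
    (hS : ∀ n ω, S n ω = ∑ i ∈ Finset.range n, X i ω)
    (N : ℕ) {c : ℝ} (hc : 0 < c) :
    ∫ ω, min (runMax S (N+1) ω) c ∂μ
      ≤ 5 * Real.sqrt (2 * ((N:ℝ)+1) * variance (X 0) μ) := by
  classical
  set Var := variance (X 0) μ with hVar
  set n := N + 1 with hn
  have hmeasS : ∀ m, Measurable (S m) := measurable_S hmeas hS
  have hS0 : ∀ ω, S 0 ω = 0 := S_zero hS
  set a := Real.sqrt (2 * ((N:ℝ)+1) * Var) with haDef
  have ha2 : a^2 = 2 * ((N:ℝ)+1) * Var := Real.sq_sqrt (by positivity)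
  have ha : 0 < a := Real.sqrt_pos.2 (by positivity)
  set M : Ω → ℝ := runMax S n with hM
  have hMmeas : Measurable M := measurable_runMax hmeasS n
  have hMnonneg : ∀ ω, 0 ≤ M ω := by
    intro ω
    have := le_runMax (S := S) (n := n) (j := 0) (by omega) ω
    rwa [hS0 ω] at this
  -- Chebyshev tail for S n
  have hcheb : ∀ t : ℝ, 0 < t →
      (μ {ω | t ≤ S n ω}).toReal ≤ ((n : ℝ) * Var) / t^2 := by
    intro t ht
    have hsub : {ω | t ≤ S n ω} ⊆ {ω | t ≤ |S n ω - S 0 ω|} := by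
      intro ω hω
      simp only [mem_setOf_eq] at *
      rw [hS0 ω, sub_zero]
      exact le_trans hω (le_abs_self _)
    have h1 := cheb_block hmeas hindep hident hL2 hmean hS (Nat.zero_le n) ht
    have h2 : (μ {ω | t ≤ |S n ω - S 0 ω|}).toReal ≤ ((n:ℝ) * Var)/t^2 := by
      refine le_trans (ENNReal.toReal_mono ENNReal.ofReal_ne_top h1) ?_
      rw [ENNReal.toReal_ofReal (div_nonneg (mul_nonneg (Nat.cast_nonneg _)
        (variance_nonneg _ _)) (by positivity))]
      simp [hVar]
    exact le_trans (ENNReal.toReal_mono (by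
      exact (lt_of_le_of_lt h1 ENNReal.ofReal_lt_top).ne) (measure_mono hsub)) h2
  -- half bound for Ottaviani
  have hhalf : ∀ k, k ≤ n → (1:ℝ)/2 ≤ (μ {ω | -a ≤ S n ω - S k ω}).toReal := by
    intro k hk
    set D := {ω | -a ≤ S n ω - S k ω} with hD
    have hDm : MeasurableSet D := measurableSet_le measurable_const ((hmeasS n).sub (hmeasS k))
    have hcompl : Dᶜ ⊆ {ω | a ≤ |S n ω - S k ω|} := by
      intro ω hω
      simp only [hD, mem_compl_iff, mem_setOf_eq, not_le] at hω
      simp only [mem_setOf_eq]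
      rw [abs_sub_comm]
      calc a ≤ -(S n ω - S k ω) := by linarith
        _ = S k ω - S n ω := by ring
        _ ≤ |S k ω - S n ω| := le_abs_self _
    have h1 := cheb_block hmeas hindep hident hL2 hmean hS hk ha
    have h2 : (μ Dᶜ).toReal ≤ 1/2 := by
      have hle := le_trans (measure_mono hcompl) h1
      refine le_trans (ENNReal.toReal_mono ENNReal.ofReal_ne_top hle) ?_
      rw [ENNReal.toReal_ofReal (div_nonneg (mul_nonneg (Nat.cast_nonneg _)
        (variance_nonneg _ _)) (by positivity))]
      rw [← hVar, ha2]
      rw [div_le_div_iff₀ (by positivity) (by norm_num)]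
      have hcast : ((n - k : ℕ) : ℝ) ≤ (N:ℝ) + 1 := by
        have h' : ((n - k : ℕ) : ℝ) ≤ (n : ℝ) := by
          exact_mod_cast Nat.sub_le n k
        have h'' : ((n:ℕ):ℝ) = (N:ℝ) + 1 := by rw [hn]; push_cast; ring
        linarith
      nlinarith
    have hsum : (μ D).toReal + (μ Dᶜ).toReal = 1 := by
      rw [← ENNReal.toReal_add (measure_ne_top μ D) (measure_ne_top μ Dᶜ),
        measure_add_measure_compl hDm, measure_univ, ENNReal.toReal_one]
    linarith
  -- Ottaviani for each level
  have hott : ∀ r : ℕ, 2 ≤ r →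
      (μ {ω | (r:ℝ) * a ≤ M ω}).toReal ≤ (1:ℝ)/((r:ℝ)-1)^2 := by
    intro r hr
    have hra : (0:ℝ) < (r:ℝ) * a := by
      have : (0:ℝ) < (r:ℝ) := by exact_mod_cast Nat.lt_of_lt_of_le (by norm_num) hr
      positivity
    have h1 := ottaviani hmeasS (fun lam a' k n hkn =>
      prob_up_pair hmeas hindep hS lam a' hkn) hS0 hra hhalf
    have hr1 : (0:ℝ) < (r:ℝ) - 1 := by
      have : (2:ℝ) ≤ (r:ℝ) := by exact_mod_cast hr
      linarith
    have h2 : (μ {ω | (r:ℝ)*a - a ≤ S n ω}).toReal ≤ ((n:ℝ)*Var)/(((r:ℝ)-1)*a)^2 := by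
      have := hcheb (((r:ℝ)-1)*a) (mul_pos hr1 ha)
      have heq : {ω | ((r:ℝ)-1)*a ≤ S n ω} = {ω | (r:ℝ)*a - a ≤ S n ω} := by
        ext ω; simp only [mem_setOf_eq]; constructor <;> intro h <;> nlinarith
      rw [heq] at this
      exact this
    have h3 : ((n:ℝ)*Var)/(((r:ℝ)-1)*a)^2 = 1/(2*((r:ℝ)-1)^2) := by
      rw [mul_pow, ha2]
      have hnc : (n:ℝ) = (N:ℝ)+1 := by rw [hn]; push_cast; ring
      rw [hnc]
      field_simp
    calc (μ {ω | (r:ℝ) * a ≤ M ω}).toReal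
        ≤ 2 * (μ {ω | (r:ℝ)*a - a ≤ S n ω}).toReal := h1
      _ ≤ 2 * (((n:ℝ)*Var)/(((r:ℝ)-1)*a)^2) := by linarith
      _ = 1/((r:ℝ)-1)^2 := by rw [h3]; field_simp
  -- pathwise layer bound
  set R := Nat.ceil (c / a) with hR
  set ind : ℕ → Ω → ℝ :=
    fun r => Set.indicator {ω' | (r:ℝ)*a ≤ M ω'} (fun _ => (1:ℝ)) with hind
  have hindnn : ∀ r ω, (0:ℝ) ≤ ind r ω := by
    intro r ω; exact Set.indicator_nonneg (fun _ _ => by norm_num) ω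
  have hindle : ∀ r ω, ind r ω ≤ 1 := by
    intro r ω
    simp only [hind, Set.indicator_apply]
    split_ifs <;> norm_num
  have hsetmeas : ∀ r : ℕ, MeasurableSet {ω' | (r:ℝ)*a ≤ M ω'} := fun r =>
    measurableSet_le measurable_const hMmeas
  have hpath : ∀ ω, min (M ω) c ≤ a + a * ∑ r ∈ Finset.Icc 1 R, ind r ω := by
    intro ω
    have hsumnn : (0:ℝ) ≤ ∑ r ∈ Finset.Icc 1 R, ind r ω :=
      Finset.sum_nonneg (fun r _ => hindnn r ω)
    rcases le_or_gt (min (M ω) c) a with h | h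
    · nlinarith
    · set t := min (M ω) c with ht
      have htM : t ≤ M ω := min_le_left _ _
      have htc : t ≤ c := min_le_right _ _
      set q := Nat.floor (t / a) with hq
      have hqle : (q:ℝ) ≤ t / a := Nat.floor_le (div_nonneg (by linarith) ha.le)
      have hqlt : t / a < (q:ℝ) + 1 := Nat.lt_floor_add_one _
      have hqR : q ≤ R := le_trans (Nat.floor_mono ((div_le_div_iff_of_pos_right ha).2 htc))
        (Nat.floor_le_ceil _)
      have hsub : Finset.Icc 1 q ⊆ Finset.Icc 1 R := Finset.Icc_subset_Icc_right hqR
      have hone : ∀ r ∈ Finset.Icc 1 q, ind r ω = 1 := by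
        intro r hr
        simp only [Finset.mem_Icc] at hr
        have hrq : (r:ℝ) ≤ (q:ℝ) := by exact_mod_cast hr.2
        have hra : (r:ℝ) * a ≤ t := by
          rw [← le_div_iff₀ ha]
          linarith
        simp only [hind]
        exact Set.indicator_of_mem (show ω ∈ {ω' | (r:ℝ)*a ≤ M ω'} from le_trans hra htM) _
      have hcount : (q:ℝ) ≤ ∑ r ∈ Finset.Icc 1 R, ind r ω := by
        calc (q:ℝ) = ∑ r ∈ Finset.Icc 1 q, (1:ℝ) := by
              rw [Finset.sum_const, Nat.card_Icc]
              simp [nsmul_eq_mul]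
          _ = ∑ r ∈ Finset.Icc 1 q, ind r ω := (Finset.sum_congr rfl hone).symm
          _ ≤ ∑ r ∈ Finset.Icc 1 R, ind r ω :=
              Finset.sum_le_sum_of_subset_of_nonneg hsub (fun r _ _ => hindnn r ω)
      have hta : t < a * ((q:ℝ) + 1) := by
        rw [← div_lt_iff₀' ha]
        exact hqlt
      nlinarith
  -- integrate
  have hintL : Integrable (fun ω => min (M ω) c) μ := by
    refine Integrable.mono' (integrable_const c) ((hMmeas.min measurable_const).aestronglyMeasurable)
      (ae_of_all _ (fun ω => ?_))
    rw [Real.norm_eq_abs, abs_le]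
    constructor
    · have := hMnonneg ω; simp only [le_min_iff]; constructor <;> linarith
    · exact min_le_right _ _
  have hintInd : ∀ r : ℕ, Integrable (ind r) μ := fun r =>
    (integrable_const (1:ℝ)).indicator (hsetmeas r)
  have hintSum : Integrable (fun ω => ∑ r ∈ Finset.Icc 1 R, ind r ω) μ :=
    integrable_finset_sum _ (fun r _ => hintInd r)
  have hintR : Integrable (fun ω => a + a * ∑ r ∈ Finset.Icc 1 R, ind r ω) μ :=
    (integrable_const a).add (hintSum.const_mul a)
  have hEind : ∀ r : ℕ, ∫ ω, ind r ω ∂μ = (μ {ω' | (r:ℝ)*a ≤ M ω'}).toReal := by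
    intro r
    simp only [hind]
    rw [integral_indicator_const (1:ℝ) (hsetmeas r)]
    simp [measureReal_def]
  have hPrSum : ∑ r ∈ Finset.Icc 1 R, (μ {ω' | (r:ℝ)*a ≤ M ω'}).toReal ≤ 3 := by
    rcases Nat.eq_zero_or_pos R with h0 | hpos
    · rw [h0]; simp
    · have hsplit : Finset.Icc 1 R = insert 1 (Finset.Icc 2 R) := by
        ext r; simp only [Finset.mem_insert, Finset.mem_Icc]; omega
      rw [hsplit, Finset.sum_insert (by simp)]
      have h2 : ∑ r ∈ Finset.Icc 2 R, (μ {ω' | (r:ℝ)*a ≤ M ω'}).toReal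
          ≤ ∑ r ∈ Finset.Icc 2 R, (1:ℝ)/((r:ℝ)-1)^2 := by
        refine Finset.sum_le_sum (fun r hr => ?_)
        exact hott r (Finset.mem_Icc.1 hr).1
      have h3 := sum_inv_sq_shift R
      have h4 : (μ {ω' | ((1:ℕ):ℝ)*a ≤ M ω'}).toReal ≤ 1 := Pr_le_one
      linarith
  calc ∫ ω, min (M ω) c ∂μ
      ≤ ∫ ω, (a + a * ∑ r ∈ Finset.Icc 1 R, ind r ω) ∂μ :=
        integral_mono hintL hintR hpath
    _ = a + a * ∑ r ∈ Finset.Icc 1 R, (μ {ω' | (r:ℝ)*a ≤ M ω'}).toReal := by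
        rw [integral_add (integrable_const a) (hintSum.const_mul a)]
        rw [integral_const]
        rw [integral_const_mul]
        rw [integral_finset_sum _ (fun r _ => hintInd r)]
        simp only [measureReal_def, measure_univ, ENNReal.toReal_one, smul_eq_mul, one_mul]
        congr 1
        congr 1
        exact Finset.sum_congr rfl (fun r _ => hEind r)
    _ ≤ a + a * 3 := by nlinarith
    _ ≤ 5 * a := by nlinarith
    _ = 5 * Real.sqrt (2 * ((N:ℝ)+1) * Var) := by rw [haDef]


/-- measurability of the stay events -/
lemma measurable_stayev (hmeasS : ∀ n, Measurable (S n)) (j : ℕ) (y : ℝ) :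
    MeasurableSet {ω : Ω | ∀ i ≤ j, -y < S i ω} := by
  have : {ω : Ω | ∀ i ≤ j, -y < S i ω} = ⋂ i, ⋂ (_ : i ≤ j), {ω | -y < S i ω} := by
    ext ω; simp
  rw [this]
  exact MeasurableSet.iInter fun i => MeasurableSet.iInter fun _ =>
    measurableSet_lt measurable_const (hmeasS i)

lemma measurable_revev (hmeasS : ∀ n, Measurable (S n)) (j : ℕ) (y : ℝ) :
    MeasurableSet {ω : Ω | ∀ i ≤ j, -y < S j ω - S i ω} := by
  have : {ω : Ω | ∀ i ≤ j, -y < S j ω - S i ω}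
      = ⋂ i, ⋂ (_ : i ≤ j), {ω | -y < S j ω - S i ω} := by
    ext ω; simp
  rw [this]
  exact MeasurableSet.iInter fun i => MeasurableSet.iInter fun _ =>
    measurableSet_lt measurable_const ((hmeasS j).sub (hmeasS i))

lemma measurable_blockev (hmeasS : ∀ n, Measurable (S n)) (k j : ℕ) (y : ℝ) :
    MeasurableSet {ω : Ω | ∀ i ≤ j, -y < S (k + i) ω - S k ω} := by
  have : {ω : Ω | ∀ i ≤ j, -y < S (k + i) ω - S k ω}
      = ⋂ i, ⋂ (_ : i ≤ j), {ω | -y < S (k + i) ω - S k ω} := by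
    ext ω; simp
  rw [this]
  exact MeasurableSet.iInter fun i => MeasurableSet.iInter fun _ =>
    measurableSet_lt measurable_const ((hmeasS (k+i)).sub (hmeasS k))

lemma measurable_fpev (hmeasS : ∀ n, Measurable (S n)) (k : ℕ) (c : ℝ) :
    MeasurableSet {ω : Ω | (∀ i < k, -c < S i ω) ∧ S k ω ≤ -c} := by
  have : {ω : Ω | (∀ i < k, -c < S i ω) ∧ S k ω ≤ -c}
      = (⋂ i, ⋂ (_ : i < k), {ω | -c < S i ω}) ∩ {ω | S k ω ≤ -c} := by
    ext ω; simp
  rw [this]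
  exact (MeasurableSet.iInter fun i => MeasurableSet.iInter fun _ =>
    measurableSet_lt measurable_const (hmeasS i)).inter
    (measurableSet_le (hmeasS k) measurable_const)

/-- KEY: ladder bound -/
lemma sum_stay_bound (hmeas : ∀ i, Measurable (X i))
    (hindep : iIndepFun X μ)
    (hident : ∀ i, IdentDistrib (X i) (X 0) μ μ)
    (hL2 : MemLp (X 0) 2 μ) (hmean : ∫ ω, X 0 ω ∂μ = 0)
    (hvar : 0 < variance (X 0) μ)
    (hS : ∀ n ω, S n ω = ∑ i ∈ Finset.range n, X i ω)
    {β : ℝ} (hβ : 0 < β) (N : ℕ) :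
    (μ {ω | β ≤ X 0 ω}).toReal
        * ∑ j ∈ Finset.range (N+1), (μ {ω | ∀ i ≤ j, -(β/2) < S i ω}).toReal
      ≤ (2/β) * (5 * Real.sqrt (2 * ((N:ℝ)+1) * variance (X 0) μ)) := by
  classical
  have hmeasS : ∀ n, Measurable (S n) := measurable_S hmeas hS
  set y' : ℝ := β/2 with hy'def
  have hy' : 0 < y' := by rw [hy'def]; linarith
  set c : ℝ := y' * ((N:ℝ)+1) with hcdef
  have hc : 0 < c := by positivity
  set B : ℕ → Set Ω := fun j => {ω | ∀ i ≤ j, -y' < S j ω - S i ω} with hB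
  set F : ℕ → Set Ω := fun j => {ω | β ≤ X j ω} with hF
  have hBm : ∀ j, MeasurableSet (B j) := fun j => measurable_revev hmeasS j y'
  have hFm : ∀ j, MeasurableSet (F j) := fun j =>
    measurableSet_le measurable_const (hmeas j)
  set ind : ℕ → Ω → ℝ := fun j => Set.indicator (B j ∩ F j) (fun _ => (1:ℝ)) with hind
  have hindnn : ∀ j ω, 0 ≤ ind j ω := fun j ω =>
    Set.indicator_nonneg (fun _ _ => by norm_num) ω
  have hindle : ∀ j ω, ind j ω ≤ 1 := by
    intro j ω
    simp only [hind, Set.indicator_apply]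
    split_ifs <;> norm_num
  -- pathwise bound
  have hpath : ∀ ω, y' * ∑ j ∈ Finset.range (N+1), ind j ω
      ≤ min (runMax S (N+1) ω) c := by
    intro ω
    refine le_min ?_ ?_
    · have tele : ∑ j ∈ Finset.range (N+1), (runMax S (j+1) ω - runMax S j ω)
          = runMax S (N+1) ω - runMax S 0 ω :=
        Finset.sum_range_sub (fun j => runMax S j ω) (N+1)
      have h0 : runMax S 0 ω = S 0 ω := by
        obtain ⟨j, hj, he⟩ := runMax_eq_S (S := S) (n := 0) ω
        interval_cases j
        exact he
      have hterm : ∀ j ∈ Finset.range (N+1),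
          y' * ind j ω ≤ runMax S (j+1) ω - runMax S j ω := by
        intro j hj
        by_cases hωj : ω ∈ B j ∩ F j
        · have hindv : ind j ω = 1 := Set.indicator_of_mem hωj _
          rw [hindv, mul_one]
          obtain ⟨i0, hi0, he⟩ := runMax_eq_S (S := S) (n := j) ω
          have hBj : -y' < S j ω - S i0 ω := hωj.1 i0 hi0
          have hFj : β ≤ X j ω := hωj.2
          have hS1 : S (j+1) ω = S j ω + X j ω := S_succ hS j ω
          have hle : S (j+1) ω ≤ runMax S (j+1) ω := le_runMax le_rfl ω
          have hyb : β = 2 * y' := by rw [hy'def]; ring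
          have : runMax S j ω < S (j+1) ω - y' := by
            rw [he, hS1]
            nlinarith
          linarith
        · have hindv : ind j ω = 0 := Set.indicator_of_notMem hωj _
          rw [hindv, mul_zero]
          have := runMax_succ_ge (S := S) j ω
          linarith
      calc y' * ∑ j ∈ Finset.range (N+1), ind j ω
          = ∑ j ∈ Finset.range (N+1), y' * ind j ω := by rw [Finset.mul_sum]
        _ ≤ ∑ j ∈ Finset.range (N+1), (runMax S (j+1) ω - runMax S j ω) :=
            Finset.sum_le_sum hterm
        _ = runMax S (N+1) ω - runMax S 0 ω := tele
        _ ≤ runMax S (N+1) ω := by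
            rw [h0, S_zero hS ω]; simp
    · have hsum : ∑ j ∈ Finset.range (N+1), ind j ω ≤ ((N:ℝ)+1) := by
        calc ∑ j ∈ Finset.range (N+1), ind j ω ≤ ∑ j ∈ Finset.range (N+1), (1:ℝ) :=
            Finset.sum_le_sum (fun j _ => hindle j ω)
          _ = ((N:ℝ)+1) := by rw [Finset.sum_const, Finset.card_range]; push_cast; ring
      calc y' * ∑ j ∈ Finset.range (N+1), ind j ω ≤ y' * ((N:ℝ)+1) := by nlinarith
        _ = c := by rw [hcdef]
  -- integrate
  have hintInd : ∀ j, Integrable (ind j) μ := fun j =>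
    (integrable_const (1:ℝ)).indicator ((hBm j).inter (hFm j))
  have hintL : Integrable (fun ω => y' * ∑ j ∈ Finset.range (N+1), ind j ω) μ :=
    (integrable_finset_sum _ (fun j _ => hintInd j)).const_mul y'
  have hMcap_meas : Measurable (fun ω => min (runMax S (N+1) ω) c) :=
    (measurable_runMax hmeasS (N+1)).min measurable_const
  have hMnonneg : ∀ ω, 0 ≤ runMax S (N+1) ω := by
    intro ω
    have := le_runMax (S := S) (n := N+1) (j := 0) (by omega) ω
    rwa [S_zero hS ω] at this
  have hintM : Integrable (fun ω => min (runMax S (N+1) ω) c) μ := by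
    refine Integrable.mono' (integrable_const c) hMcap_meas.aestronglyMeasurable
      (ae_of_all _ (fun ω => ?_))
    rw [Real.norm_eq_abs, abs_le]
    constructor
    · have := hMnonneg ω; simp only [le_min_iff]; constructor <;> linarith
    · exact min_le_right _ _
  have hstep := integral_mono hintL hintM hpath
  have hLHS : ∫ ω, y' * ∑ j ∈ Finset.range (N+1), ind j ω ∂μ
      = y' * ∑ j ∈ Finset.range (N+1), (μ (B j ∩ F j)).toReal := by
    rw [integral_const_mul, integral_finset_sum _ (fun j _ => hintInd j)]
    congr 1
    refine Finset.sum_congr rfl (fun j _ => ?_)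
    simp only [hind]
    rw [integral_indicator_const (1:ℝ) ((hBm j).inter (hFm j))]
    simp [measureReal_def]
  have hprodj : ∀ j, (μ (B j ∩ F j)).toReal
      = (μ {ω | ∀ i ≤ j, -y' < S i ω}).toReal * (μ {ω | β ≤ X 0 ω}).toReal := by
    intro j
    rw [hB, hF]
    rw [prob_jump hmeas hindep hident hS j y' β, ENNReal.toReal_mul]
  have hcap := exp_capped_max hmeas hindep hident hL2 hmean hvar hS N hc
  have hmain : y' * ((μ {ω | β ≤ X 0 ω}).toReal
      * ∑ j ∈ Finset.range (N+1), (μ {ω | ∀ i ≤ j, -y' < S i ω}).toReal)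
      ≤ 5 * Real.sqrt (2 * ((N:ℝ)+1) * variance (X 0) μ) := by
    have e1 : y' * ((μ {ω | β ≤ X 0 ω}).toReal
        * ∑ j ∈ Finset.range (N+1), (μ {ω | ∀ i ≤ j, -y' < S i ω}).toReal)
        = y' * ∑ j ∈ Finset.range (N+1), (μ (B j ∩ F j)).toReal := by
      congr 1
      rw [Finset.mul_sum]
      refine Finset.sum_congr rfl (fun j _ => ?_)
      rw [hprodj j]
      ring
    rw [e1, ← hLHS]
    exact le_trans hstep hcap
  have hy'2 : y' = β/2 := hy'def
  calc (μ {ω | β ≤ X 0 ω}).toReal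
        * ∑ j ∈ Finset.range (N+1), (μ {ω | ∀ i ≤ j, -(β/2) < S i ω}).toReal
      = (1/y') * (y' * ((μ {ω | β ≤ X 0 ω}).toReal
        * ∑ j ∈ Finset.range (N+1), (μ {ω | ∀ i ≤ j, -y' < S i ω}).toReal)) := by
        rw [hy'2]
        field_simp
    _ ≤ (1/y') * (5 * Real.sqrt (2 * ((N:ℝ)+1) * variance (X 0) μ)) := by
        have h1y : 0 < 1/y' := by positivity
        nlinarith [hmain, Real.sqrt_nonneg (2 * ((N:ℝ)+1) * variance (X 0) μ)]
    _ = (2/β) * (5 * Real.sqrt (2 * ((N:ℝ)+1) * variance (X 0) μ)) := by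
        rw [hy'2]
        norm_num

/-- KEY: window occupation bound -/
lemma window_sum (hmeas : ∀ i, Measurable (X i))
    (hindep : iIndepFun X μ)
    (hident : ∀ i, IdentDistrib (X i) (X 0) μ μ)
    (hS : ∀ n ω, S n ω = ∑ i ∈ Finset.range n, X i ω)
    {y' : ℝ} (hy' : 0 < y') (ℓ : ℕ) (N : ℕ) :
    ∑ n ∈ Finset.range (N+1), (μ {ω | (∀ j ≤ n, -(((ℓ:ℝ)+1)*y') < S j ω)
        ∧ (∃ j ≤ n, S j ω ≤ -((ℓ:ℝ)*y'))}).toReal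
      ≤ ∑ j ∈ Finset.range (N+1), (μ {ω | ∀ i ≤ j, -y' < S i ω}).toReal := by
  classical
  have hmeasS : ∀ n, Measurable (S n) := measurable_S hmeas hS
  set c : ℝ := (ℓ:ℝ) * y' with hcdef
  set Win : ℕ → Set Ω := fun n => {ω | (∀ j ≤ n, -(((ℓ:ℝ)+1)*y') < S j ω)
      ∧ (∃ j ≤ n, S j ω ≤ -((ℓ:ℝ)*y'))} with hWin
  set A : ℕ → Set Ω := fun k => {ω | (∀ i < k, -c < S i ω) ∧ S k ω ≤ -c} with hA
  set Bl : ℕ → ℕ → Set Ω := fun k j => {ω | ∀ i ≤ j, -y' < S (k + i) ω - S k ω} with hBl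
  have hWinm : ∀ n, MeasurableSet (Win n) := by
    intro n
    have : Win n = (⋂ j, ⋂ (_ : j ≤ n), {ω | -(((ℓ:ℝ)+1)*y') < S j ω})
        ∩ (⋃ j, ⋃ (_ : j ≤ n), {ω | S j ω ≤ -((ℓ:ℝ)*y')}) := by
      ext ω; simp [hWin]
    rw [this]
    exact (MeasurableSet.iInter fun j => MeasurableSet.iInter fun _ =>
      measurableSet_lt measurable_const (hmeasS j)).inter
      (MeasurableSet.iUnion fun j => MeasurableSet.iUnion fun _ =>
        measurableSet_le (hmeasS j) measurable_const)
  have hAm : ∀ k, MeasurableSet (A k) := fun k => measurable_fpev hmeasS k c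
  have hBlm : ∀ k j, MeasurableSet (Bl k j) := fun k j => measurable_blockev hmeasS k j y'
  -- pathwise bound
  have hpath : ∀ ω, ∑ n ∈ Finset.range (N+1), Set.indicator (Win n) (fun _ => (1:ℝ)) ω
      ≤ ∑ k ∈ Finset.range (N+1), ∑ j ∈ Finset.range (N+1),
          Set.indicator (A k ∩ Bl k j) (fun _ => (1:ℝ)) ω := by
    intro ω
    have hnnW : ∀ n, 0 ≤ Set.indicator (Win n) (fun _ => (1:ℝ)) ω := fun n =>
      Set.indicator_nonneg (fun _ _ => by norm_num) ω
    have hnnAB : ∀ k j, 0 ≤ Set.indicator (A k ∩ Bl k j) (fun _ => (1:ℝ)) ω := fun k j =>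
      Set.indicator_nonneg (fun _ _ => by norm_num) ω
    by_cases hE : ∃ n, n ≤ N ∧ ω ∈ Win n
    · obtain ⟨n₀, hn₀, hω₀⟩ := hE
      obtain ⟨j₀, hj₀, hSj₀⟩ := hω₀.2
      have hex : ∃ i, S i ω ≤ -c := ⟨j₀, hSj₀⟩
      set k := Nat.find hex with hk
      have hkS : S k ω ≤ -c := Nat.find_spec hex
      have hkj₀ : k ≤ j₀ := Nat.find_min' hex hSj₀
      have hkN : k ≤ N := by omega
      have hωA : ω ∈ A k := ⟨fun i hi => not_le.1 (Nat.find_min hex hi), hkS⟩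
      have hbound : ∀ n ∈ Finset.range (N+1),
          Set.indicator (Win n) (fun _ => (1:ℝ)) ω
            ≤ if k ≤ n then Set.indicator (Bl k (n - k)) (fun _ => (1:ℝ)) ω else 0 := by
        intro n hn
        by_cases hωn : ω ∈ Win n
        · obtain ⟨j₁, hj₁, hSj₁⟩ := hωn.2
          have hkn : k ≤ n := le_trans (Nat.find_min' hex hSj₁) hj₁
          rw [if_pos hkn]
          have hωB : ω ∈ Bl k (n - k) := by
            intro i hi
            have h1 : -(((ℓ:ℝ)+1)*y') < S (k + i) ω := hωn.1 (k + i) (by omega)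
            have hexp : ((ℓ:ℝ)+1)*y' = c + y' := by rw [hcdef]; ring
            rw [hexp] at h1
            linarith
          rw [Set.indicator_of_mem hωn _, Set.indicator_of_mem hωB _]
        · rw [Set.indicator_of_notMem hωn _]
          split_ifs
          · exact Set.indicator_nonneg (fun _ _ => by norm_num) ω
          · exact le_rfl
      calc ∑ n ∈ Finset.range (N+1), Set.indicator (Win n) (fun _ => (1:ℝ)) ω
          ≤ ∑ n ∈ Finset.range (N+1), (if k ≤ n then
              Set.indicator (Bl k (n - k)) (fun _ => (1:ℝ)) ω else 0) :=
            Finset.sum_le_sum hbound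
        _ = ∑ n ∈ (Finset.range (N+1)).filter (fun n => k ≤ n),
              Set.indicator (Bl k (n - k)) (fun _ => (1:ℝ)) ω := by
            rw [Finset.sum_filter]
        _ = ∑ n ∈ Finset.Ico k (N+1), Set.indicator (Bl k (n - k)) (fun _ => (1:ℝ)) ω := by
            congr 1
            ext n
            simp only [Finset.mem_filter, Finset.mem_range, Finset.mem_Ico]
            omega
        _ = ∑ j ∈ Finset.range (N+1-k), Set.indicator (Bl k ((k+j) - k)) (fun _ => (1:ℝ)) ω :=
            Finset.sum_Ico_eq_sum_range _ _ _
        _ = ∑ j ∈ Finset.range (N+1-k), Set.indicator (Bl k j) (fun _ => (1:ℝ)) ω := by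
            refine Finset.sum_congr rfl (fun j _ => ?_)
            rw [Nat.add_sub_cancel_left]
        _ ≤ ∑ j ∈ Finset.range (N+1), Set.indicator (Bl k j) (fun _ => (1:ℝ)) ω := by
            refine Finset.sum_le_sum_of_subset_of_nonneg ?_ (fun j _ _ =>
              Set.indicator_nonneg (fun _ _ => by norm_num) ω)
            exact Finset.range_subset_range.2 (by omega)
        _ = ∑ j ∈ Finset.range (N+1), Set.indicator (A k ∩ Bl k j) (fun _ => (1:ℝ)) ω := by
            refine Finset.sum_congr rfl (fun j _ => ?_)
            by_cases hωB : ω ∈ Bl k j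
            · rw [Set.indicator_of_mem hωB _, Set.indicator_of_mem (Set.mem_inter hωA hωB) _]
            · rw [Set.indicator_of_notMem hωB _,
                Set.indicator_of_notMem (fun hc' => hωB hc'.2) _]
        _ ≤ ∑ k' ∈ Finset.range (N+1), ∑ j ∈ Finset.range (N+1),
              Set.indicator (A k' ∩ Bl k' j) (fun _ => (1:ℝ)) ω := by
            refine Finset.single_le_sum (f := fun k' => ∑ j ∈ Finset.range (N+1),
              Set.indicator (A k' ∩ Bl k' j) (fun _ => (1:ℝ)) ω)
              (fun k' _ => Finset.sum_nonneg (fun j _ => hnnAB k' j))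
              (Finset.mem_range.2 (by omega))
    · have hz : ∀ n ∈ Finset.range (N+1),
          Set.indicator (Win n) (fun _ => (1:ℝ)) ω = 0 := by
        intro n hn
        refine Set.indicator_of_notMem (fun hωn => hE ⟨n, Nat.lt_succ_iff.1
          (Finset.mem_range.1 hn), hωn⟩) _
      rw [Finset.sum_congr rfl hz]
      simp only [Finset.sum_const_zero]
      exact Finset.sum_nonneg (fun k _ => Finset.sum_nonneg (fun j _ => hnnAB k j))
  -- integrate
  have hintW : ∀ n, Integrable (Set.indicator (Win n) (fun _ => (1:ℝ))) μ := fun n =>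
    (integrable_const (1:ℝ)).indicator (hWinm n)
  have hintAB : ∀ k j, Integrable (Set.indicator (A k ∩ Bl k j) (fun _ => (1:ℝ))) μ :=
    fun k j => (integrable_const (1:ℝ)).indicator ((hAm k).inter (hBlm k j))
  have hint1 : Integrable (fun ω => ∑ n ∈ Finset.range (N+1),
      Set.indicator (Win n) (fun _ => (1:ℝ)) ω) μ :=
    integrable_finset_sum _ (fun n _ => hintW n)
  have hint2 : Integrable (fun ω => ∑ k ∈ Finset.range (N+1), ∑ j ∈ Finset.range (N+1),
      Set.indicator (A k ∩ Bl k j) (fun _ => (1:ℝ)) ω) μ :=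
    integrable_finset_sum _ (fun k _ => integrable_finset_sum _ (fun j _ => hintAB k j))
  have hstep := integral_mono hint1 hint2 hpath
  rw [integral_finset_sum _ (fun n _ => hintW n)] at hstep
  rw [integral_finset_sum _ (fun k _ => integrable_finset_sum _ (fun j _ => hintAB k j))]
    at hstep
  have hWeq : ∀ n, ∫ ω, Set.indicator (Win n) (fun _ => (1:ℝ)) ω ∂μ = (μ (Win n)).toReal := by
    intro n
    rw [integral_indicator_const (1:ℝ) (hWinm n)]
    simp [measureReal_def]
  have hABeq : ∀ k, ∫ ω, ∑ j ∈ Finset.range (N+1),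
      Set.indicator (A k ∩ Bl k j) (fun _ => (1:ℝ)) ω ∂μ
      = (μ (A k)).toReal * ∑ j ∈ Finset.range (N+1),
          (μ {ω | ∀ i ≤ j, -y' < S i ω}).toReal := by
    intro k
    rw [integral_finset_sum _ (fun j _ => hintAB k j)]
    rw [Finset.mul_sum]
    refine Finset.sum_congr rfl (fun j _ => ?_)
    rw [integral_indicator_const (1:ℝ) ((hAm k).inter (hBlm k j))]
    rw [hA, hBl, measureReal_def]
    rw [prob_fp_stay hmeas hindep hident hS c k j y', ENNReal.toReal_mul]
    simp
  rw [Finset.sum_congr rfl (fun n _ => hWeq n)] at hstep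
  rw [Finset.sum_congr rfl (fun k _ => hABeq k)] at hstep
  have hAdisj : Set.Pairwise ↑(Finset.range (N+1)) (Function.onFun Disjoint A) := by
    intro k _ k' _ hkk'
    rcases Nat.lt_or_ge k k' with h | h
    · exact Set.disjoint_left.2 fun ω hω hω' => absurd (hω'.1 k h) (not_lt.2 hω.2)
    · have h' : k' < k := by omega
      exact Set.disjoint_left.2 fun ω hω hω' => absurd (hω.1 k' h') (not_lt.2 hω'.2)
  have hAsum : ∑ k ∈ Finset.range (N+1), (μ (A k)).toReal ≤ 1 := by
    rw [← Pr_biUnion_disjoint hAdisj (fun k _ => hAm k)]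
    exact Pr_le_one
  have hvnn : 0 ≤ ∑ j ∈ Finset.range (N+1), (μ {ω | ∀ i ≤ j, -y' < S i ω}).toReal :=
    Finset.sum_nonneg (fun j _ => ENNReal.toReal_nonneg)
  calc ∑ n ∈ Finset.range (N+1), (μ (Win n)).toReal
      ≤ ∑ k ∈ Finset.range (N+1), ((μ (A k)).toReal * ∑ j ∈ Finset.range (N+1),
          (μ {ω | ∀ i ≤ j, -y' < S i ω}).toReal) := hstep
    _ = (∑ k ∈ Finset.range (N+1), (μ (A k)).toReal) * ∑ j ∈ Finset.range (N+1),
          (μ {ω | ∀ i ≤ j, -y' < S i ω}).toReal := by rw [Finset.sum_mul]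
    _ ≤ 1 * ∑ j ∈ Finset.range (N+1), (μ {ω | ∀ i ≤ j, -y' < S i ω}).toReal := by
        refine mul_le_mul_of_nonneg_right hAsum hvnn
    _ = ∑ j ∈ Finset.range (N+1), (μ {ω | ∀ i ≤ j, -y' < S i ω}).toReal := one_mul _

/-- cover of the stay event by windows -/
lemma cover_windows (hS : ∀ n ω, S n ω = ∑ i ∈ Finset.range n, X i ω)
    {y' : ℝ} (hy' : 0 < y') {x : ℝ} (hx : 0 ≤ x) (n : ℕ) :
    {ω : Ω | ∀ j ≤ n, -x ≤ S j ω} ⊆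
      ⋃ ℓ ∈ Finset.range (Nat.floor (x/y') + 1),
        {ω | (∀ j ≤ n, -(((ℓ:ℝ)+1)*y') < S j ω) ∧ (∃ j ≤ n, S j ω ≤ -((ℓ:ℝ)*y'))} := by
  intro ω hω
  have hne : (Finset.range (n+1)).Nonempty := ⟨0, by simp⟩
  set msf := (Finset.range (n+1)).inf' hne (fun j => S j ω) with hmsf
  have hmsf_le : ∀ j, j ≤ n → msf ≤ S j ω := fun j hj =>
    Finset.inf'_le _ (Finset.mem_range.2 (by omega))
  have hmem : ∃ j, j ≤ n ∧ S j ω = msf := by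
    obtain ⟨j, hj, he⟩ := Finset.exists_mem_eq_inf' hne (fun j => S j ω)
    exact ⟨j, Nat.lt_succ_iff.1 (Finset.mem_range.1 hj), he.symm⟩
  have hxm : -x ≤ msf := by
    obtain ⟨j, hj, he⟩ := hmem
    rw [← he]; exact hω j hj
  have hm0 : msf ≤ 0 := by
    have := hmsf_le 0 (by omega)
    rwa [S_zero hS ω] at this
  have hnm : 0 ≤ -msf := by linarith
  set ℓ := Nat.floor ((-msf)/y') with hℓ
  have hfl : ((ℓ:ℝ)) ≤ (-msf)/y' := Nat.floor_le (div_nonneg hnm hy'.le)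
  have h1 : (ℓ:ℝ) * y' ≤ -msf := by
    calc (ℓ:ℝ)*y' ≤ ((-msf)/y')*y' := mul_le_mul_of_nonneg_right hfl hy'.le
      _ = -msf := div_mul_cancel₀ _ (ne_of_gt hy')
  have hflt : (-msf)/y' < (ℓ:ℝ) + 1 := Nat.lt_floor_add_one _
  have h2 : -msf < ((ℓ:ℝ)+1)*y' := by
    calc -msf = ((-msf)/y')*y' := (div_mul_cancel₀ _ (ne_of_gt hy')).symm
      _ < ((ℓ:ℝ)+1)*y' := by nlinarith
  have hℓL : ℓ < Nat.floor (x/y') + 1 := by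
    have hle : ℓ ≤ Nat.floor (x/y') := Nat.floor_mono
      ((div_le_div_iff_of_pos_right hy').2 (by linarith))
    omega
  refine mem_biUnion (Finset.mem_range.2 hℓL) ?_
  refine ⟨fun j hj => ?_, ?_⟩
  · have := hmsf_le j hj
    linarith
  · obtain ⟨j, hj, he⟩ := hmem
    exact ⟨j, hj, by rw [he]; linarith⟩

/-- positive mass above some positive level -/
lemma exists_beta (hmeas0 : Measurable (X 0)) (hL2 : MemLp (X 0) 2 μ)
    (hmean : ∫ ω, X 0 ω ∂μ = 0) (hvar : 0 < variance (X 0) μ) :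
    ∃ β : ℝ, 0 < β ∧ 0 < (μ {ω | β ≤ X 0 ω}).toReal := by
  by_contra h
  push_neg at h
  have hzero : ∀ β : ℝ, 0 < β → μ {ω | β ≤ X 0 ω} = 0 := by
    intro β hβ
    have h1 := h β hβ
    have h2 : 0 ≤ (μ {ω | β ≤ X 0 ω}).toReal := ENNReal.toReal_nonneg
    have h3 : (μ {ω | β ≤ X 0 ω}).toReal = 0 := le_antisymm h1 h2
    exact ((ENNReal.toReal_eq_zero_iff _).1 h3).resolve_right (measure_ne_top μ _)
  have hpos0 : μ {ω | 0 < X 0 ω} = 0 := by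
    have hcup : {ω | 0 < X 0 ω} = ⋃ k : ℕ, {ω | 1/((k:ℝ)+1) ≤ X 0 ω} := by
      ext ω
      simp only [mem_setOf_eq, mem_iUnion]
      constructor
      · intro h0
        obtain ⟨k, hk⟩ := exists_nat_gt (1 / X 0 ω)
        refine ⟨k, ?_⟩
        rw [div_le_iff₀ (by positivity)]
        have hk1 : 1 / X 0 ω < (k:ℝ) + 1 := by linarith
        rw [div_lt_iff₀ h0] at hk1
        linarith [hk1]
      · rintro ⟨k, hk⟩
        have : (0:ℝ) < 1/((k:ℝ)+1) := by positivity
        linarith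
    rw [hcup]
    exact measure_iUnion_null (fun k => hzero _ (by positivity))
  have hae : ∀ᵐ ω ∂μ, X 0 ω ≤ 0 := by
    rw [ae_iff]
    convert hpos0 using 2
    ext ω
    simp [not_le]
  have hint : Integrable (X 0) μ := hL2.integrable one_le_two
  have h0 : (-(X 0)) =ᵐ[μ] 0 := by
    refine (integral_eq_zero_iff_of_nonneg_ae ?_ hint.neg).1 ?_
    · filter_upwards [hae] with ω hω
      simp only [Pi.neg_apply, Pi.zero_apply]
      linarith
    · have : ∫ ω, (-(X 0)) ω ∂μ = 0 := by
        simp only [Pi.neg_apply]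
        rw [integral_neg, hmean, neg_zero]
      exact this
  have hX0 : X 0 =ᵐ[μ] 0 := by
    filter_upwards [h0] with ω hω
    simp only [Pi.neg_apply, Pi.zero_apply] at *
    linarith
  have hsq : (fun ω => (X 0 ω)^2) =ᵐ[μ] 0 := by
    filter_upwards [hX0] with ω hω
    simp only [Pi.zero_apply] at *
    rw [hω]
    norm_num
  have hv : variance (X 0) μ = 0 := by
    rw [variance_eq_sub hL2]
    have h1 : μ[(X 0)^2] = 0 := by
      have : ((X 0)^2 : Ω → ℝ) =ᵐ[μ] 0 := by
        filter_upwards [hsq] with ω hω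
        simpa using hω
      rw [integral_congr_ae this]
      simp
    have h2 : μ[X 0] = 0 := hmean
    rw [h1, h2]
    norm_num
  linarith

end Infra

/-- There exists a constant `α₁ > 0` such that for every real `x ≥ 0` and every
integer `n ≥ 1`, `P_x(min_{0 ≤ j ≤ n} S_j ≥ 0) ≤ α₁ (1 + x) n^(-1/2)`, where `S` is a centered
random walk with finite positive variance. -/
theorem stmt0 {Ω : Type*} [MeasurableSpace Ω] (μ : Measure Ω) [IsProbabilityMeasure μ]
    (X : ℕ → Ω → ℝ) (hmeas : ∀ i, Measurable (X i))
    (hindep : iIndepFun X μ)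
    (hident : ∀ i, IdentDistrib (X i) (X 0) μ μ)
    (hL2 : MemLp (X 0) 2 μ)
    (hmean : ∫ ω, X 0 ω ∂μ = 0)
    (hvar : 0 < variance (X 0) μ)
    (S : ℕ → Ω → ℝ)
    (hS : ∀ n ω, S n ω = ∑ i ∈ Finset.range n, X i ω) :
    ∃ α₁ > (0:ℝ), ∀ x : ℝ, 0 ≤ x → ∀ n : ℕ, 1 ≤ n →
      (μ {ω | ∀ j ≤ n, 0 ≤ x + S j ω}).toReal ≤ α₁ * (1 + x) * (n : ℝ) ^ (-(1/2 : ℝ)) := by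
  classical
  obtain ⟨β, hβ, hp⟩ := exists_beta (μ := μ) (hmeas 0) hL2 hmean hvar
  set p : ℝ := (μ {ω | β ≤ X 0 ω}).toReal with hpdef
  set Var : ℝ := variance (X 0) μ with hVardef
  set y' : ℝ := β/2 with hy'def
  have hy' : 0 < y' := by rw [hy'def]; linarith
  set K : ℝ := (2/β) * (5 * Real.sqrt (2*Var)) / p with hKdef
  have hKnn : 0 ≤ K := by
    rw [hKdef]
    have h1 : (0:ℝ) ≤ 2/β := by positivity
    have h2 : (0:ℝ) ≤ Real.sqrt (2*Var) := Real.sqrt_nonneg _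
    positivity
  have hSig : ∀ N : ℕ, ∑ j ∈ Finset.range (N+1), (μ {ω | ∀ i ≤ j, -y' < S i ω}).toReal
      ≤ K * Real.sqrt ((N:ℝ)+1) := by
    intro N
    have h1 := sum_stay_bound hmeas hindep hident hL2 hmean hvar hS hβ N
    have hsqrt : Real.sqrt (2*((N:ℝ)+1)*Var) = Real.sqrt (2*Var) * Real.sqrt ((N:ℝ)+1) := by
      rw [← Real.sqrt_mul (by positivity)]
      congr 1
      ring
    have h2 : p * ∑ j ∈ Finset.range (N+1), (μ {ω | ∀ i ≤ j, -y' < S i ω}).toReal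
        ≤ (2/β) * (5 * Real.sqrt (2*((N:ℝ)+1)*Var)) := by
      rw [hpdef, hy'def, hVardef]
      exact h1
    have h4 : p * (K * Real.sqrt ((N:ℝ)+1)) = (2/β) * (5 * Real.sqrt (2*((N:ℝ)+1)*Var)) := by
      rw [hKdef, hsqrt]
      field_simp
    rw [← h4] at h2
    exact (mul_le_mul_iff_of_pos_left hp).1 h2
  refine ⟨(2/β + 1) * K + 1, ?_, ?_⟩
  · have h1 : (0:ℝ) ≤ (2/β+1)*K := mul_nonneg (by positivity) hKnn
    linarith
  intro x hx n hn
  set L : ℕ := Nat.floor (x/y') + 1 with hLdef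
  have hEv : {ω : Ω | ∀ j ≤ n, 0 ≤ x + S j ω} = {ω : Ω | ∀ j ≤ n, -x ≤ S j ω} := by
    ext ω
    simp only [mem_setOf_eq]
    exact forall₂_congr (fun j hj => by constructor <;> intro h <;> linarith)
  rw [hEv]
  -- monotonicity step
  have hmono : ((n:ℝ)+1) * (μ {ω | ∀ j ≤ n, -x ≤ S j ω}).toReal
      ≤ ∑ m ∈ Finset.range (n+1), (μ {ω | ∀ j ≤ m, -x ≤ S j ω}).toReal := by
    have hsub : ∀ m ∈ Finset.range (n+1),
        (μ {ω | ∀ j ≤ n, -x ≤ S j ω}).toReal ≤ (μ {ω | ∀ j ≤ m, -x ≤ S j ω}).toReal := by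
      intro m hm
      refine Pr_mono (fun ω hω j hj => hω j ?_)
      have := Finset.mem_range.1 hm
      omega
    calc ((n:ℝ)+1) * (μ {ω | ∀ j ≤ n, -x ≤ S j ω}).toReal
        = ∑ _m ∈ Finset.range (n+1), (μ {ω | ∀ j ≤ n, -x ≤ S j ω}).toReal := by
          rw [Finset.sum_const, Finset.card_range, nsmul_eq_mul]
          push_cast
          ring
      _ ≤ ∑ m ∈ Finset.range (n+1), (μ {ω | ∀ j ≤ m, -x ≤ S j ω}).toReal :=
          Finset.sum_le_sum hsub
  -- cover step
  have hcov : ∀ m : ℕ, (μ {ω | ∀ j ≤ m, -x ≤ S j ω}).toReal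
      ≤ ∑ ℓ ∈ Finset.range L, (μ {ω | (∀ j ≤ m, -(((ℓ:ℝ)+1)*y') < S j ω)
          ∧ (∃ j ≤ m, S j ω ≤ -((ℓ:ℝ)*y'))}).toReal := by
    intro m
    refine le_trans (Pr_mono (cover_windows hS hy' hx m)) Pr_biUnion_le
  -- combine
  have hcomb : ∑ m ∈ Finset.range (n+1), (μ {ω | ∀ j ≤ m, -x ≤ S j ω}).toReal
      ≤ (L:ℝ) * (K * Real.sqrt ((n:ℝ)+1)) := by
    calc ∑ m ∈ Finset.range (n+1), (μ {ω | ∀ j ≤ m, -x ≤ S j ω}).toReal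
        ≤ ∑ m ∈ Finset.range (n+1), ∑ ℓ ∈ Finset.range L,
            (μ {ω | (∀ j ≤ m, -(((ℓ:ℝ)+1)*y') < S j ω)
              ∧ (∃ j ≤ m, S j ω ≤ -((ℓ:ℝ)*y'))}).toReal :=
          Finset.sum_le_sum (fun m _ => hcov m)
      _ = ∑ ℓ ∈ Finset.range L, ∑ m ∈ Finset.range (n+1),
            (μ {ω | (∀ j ≤ m, -(((ℓ:ℝ)+1)*y') < S j ω)
              ∧ (∃ j ≤ m, S j ω ≤ -((ℓ:ℝ)*y'))}).toReal := Finset.sum_comm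
      _ ≤ ∑ _ℓ ∈ Finset.range L, ∑ j ∈ Finset.range (n+1),
            (μ {ω | ∀ i ≤ j, -y' < S i ω}).toReal :=
          Finset.sum_le_sum (fun ℓ _ => window_sum hmeas hindep hident hS hy' ℓ n)
      _ ≤ ∑ _ℓ ∈ Finset.range L, (K * Real.sqrt ((n:ℝ)+1)) :=
          Finset.sum_le_sum (fun ℓ _ => hSig n)
      _ = (L:ℝ) * (K * Real.sqrt ((n:ℝ)+1)) := by
          rw [Finset.sum_const, Finset.card_range, nsmul_eq_mul]
  -- numeric conclusion
  have hs1 : (0:ℝ) < Real.sqrt ((n:ℝ)+1) := Real.sqrt_pos.2 (by positivity)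
  have hsn : (0:ℝ) < Real.sqrt (n:ℝ) := Real.sqrt_pos.2 (by
    have : (1:ℝ) ≤ (n:ℝ) := by exact_mod_cast hn
    linarith)
  have hmul : Real.sqrt ((n:ℝ)+1) * Real.sqrt ((n:ℝ)+1) = (n:ℝ)+1 :=
    Real.mul_self_sqrt (by positivity)
  have hPr : (μ {ω | ∀ j ≤ n, -x ≤ S j ω}).toReal ≤ (L:ℝ) * K / Real.sqrt ((n:ℝ)+1) := by
    rw [le_div_iff₀ hs1]
    have hch := le_trans hmono hcomb
    have h5 : (μ {ω | ∀ j ≤ n, -x ≤ S j ω}).toReal * Real.sqrt ((n:ℝ)+1) * Real.sqrt ((n:ℝ)+1)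
        ≤ ((L:ℝ) * K) * Real.sqrt ((n:ℝ)+1) := by
      calc (μ {ω | ∀ j ≤ n, -x ≤ S j ω}).toReal * Real.sqrt ((n:ℝ)+1) * Real.sqrt ((n:ℝ)+1)
          = ((n:ℝ)+1) * (μ {ω | ∀ j ≤ n, -x ≤ S j ω}).toReal := by
            rw [mul_assoc, hmul]; ring
        _ ≤ (L:ℝ) * (K * Real.sqrt ((n:ℝ)+1)) := hch
        _ = ((L:ℝ) * K) * Real.sqrt ((n:ℝ)+1) := by ring
    exact le_of_mul_le_mul_right h5 hs1
  have hLle : (L:ℝ) ≤ 2*x/β + 1 := by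
    rw [hLdef]
    push_cast
    have h1 : (Nat.floor (x/y') : ℝ) ≤ x/y' := Nat.floor_le (by positivity)
    have h2 : x/y' = 2*x/β := by rw [hy'def]; field_simp
    linarith
  have hrpow : (n:ℝ) ^ (-(1/2 : ℝ)) = 1 / Real.sqrt (n:ℝ) := by
    rw [Real.rpow_neg (Nat.cast_nonneg n), ← Real.sqrt_eq_rpow, one_div]
  have hsqle : Real.sqrt (n:ℝ) ≤ Real.sqrt ((n:ℝ)+1) := Real.sqrt_le_sqrt (by linarith)
  have hfin1 : (L:ℝ) * K / Real.sqrt ((n:ℝ)+1) ≤ (L:ℝ) * K / Real.sqrt (n:ℝ) := by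
    have hLK : (0:ℝ) ≤ (L:ℝ) * K := mul_nonneg (Nat.cast_nonneg L) hKnn
    exact div_le_div_of_nonneg_left hLK hsn hsqle
  have hstep2 : (L:ℝ) * K / Real.sqrt (n:ℝ)
      ≤ ((2/β+1)*K+1) * (1+x) * (1/Real.sqrt (n:ℝ)) := by
    rw [div_eq_mul_one_div]
    have hfac : (L:ℝ)*K ≤ ((2/β+1)*K+1)*(1+x) := by
      have hexp : (2/β+1)*(1+x) = 2/β + 2*x/β + 1 + x := by field_simp; ring
      have h1 : (L:ℝ)*K ≤ (2*x/β+1)*K := mul_le_mul_of_nonneg_right hLle hKnn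
      have h2 : (2*x/β+1) ≤ (2/β+1)*(1+x) := by
        rw [hexp]
        have h3 : (0:ℝ) ≤ 2/β := by positivity
        linarith
      have h3 : (2*x/β+1)*K ≤ ((2/β+1)*(1+x))*K := mul_le_mul_of_nonneg_right h2 hKnn
      have h4 : ((2/β+1)*(1+x))*K = ((2/β+1)*K)*(1+x) := by ring
      have h5 : ((2/β+1)*K)*(1+x) ≤ ((2/β+1)*K+1)*(1+x) := by nlinarith
      linarith
    have h1s : (0:ℝ) ≤ 1/Real.sqrt (n:ℝ) := by positivity
    exact mul_le_mul_of_nonneg_right hfac h1s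
  rw [hrpow]
  calc (μ {ω | ∀ j ≤ n, -x ≤ S j ω}).toReal
      ≤ (L:ℝ) * K / Real.sqrt ((n:ℝ)+1) := hPr
    _ ≤ (L:ℝ) * K / Real.sqrt (n:ℝ) := hfin1
    _ ≤ ((2/β+1)*K+1) * (1+x) * (1/Real.sqrt (n:ℝ)) := hstep2
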